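/- Let K be a field of characteristic zero, let s ≥ 1 and r_1,…,r_s ≥ 1 be integers, and let R = K[x, y_{1,1},…,y_{1,r_1},…,y_{s,1},…,y_{s,r_s}]. Let D = ∂_x + Σ_{i=1}^{s} Σ_{j=1}^{r_i} (a_i(x)·y_{i,j} + b_{i,j}(x))·∂_{i,j} be the K-derivation of R with a_i, b_{i,j} ∈ K[x] and a_i ≠ a_l for i ≠ l. If D is a simple derivation, then the variable y_{1,1} does not belong to Im D = D(R); that is, there is no f ∈ R with D(f) = y_{1,1}. -/

import Mathlib

open MvPolynomial

/-- A `K`-subspace `M` of `R` is a Mathieu–Zhao space if for all `a, b ∈ R` such that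
`a ^ m ∈ M` for all `m ≥ 1`, there exists `N` such that `b * a ^ m ∈ M` for all `m ≥ N`. -/
def IsMathieuZhao (K : Type*) {R : Type*} [Field K] [CommRing R] [Algebra K R]
    (M : Submodule K R) : Prop :=
  ∀ a b : R, (∀ m : ℕ, 1 ≤ m → a ^ m ∈ M) →
    ∃ N : ℕ, ∀ m : ℕ, N ≤ m → b * a ^ m ∈ M

/-- A `K`-derivation `D` of `R` is simple if the only ideals `I` of `R` with `D(I) ⊆ I`
are `0` and `R`. -/
def Derivation.IsSimple {K R : Type*} [CommRing K] [CommRing R] [Algebra K R]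
    (D : Derivation K R R) : Prop :=
  ∀ I : Ideal R, (∀ a ∈ I, D a ∈ I) → I = ⊥ ∨ I = ⊤

section ShamAux

variable {K : Type*} [Field K]

/-- Every polynomial over a char-zero field has a polynomial antiderivative. -/
lemma sham_exists_antideriv [CharZero K] (b : Polynomial K) :
    ∃ p : Polynomial K, Polynomial.derivative p = b := by
  classical
  refine ⟨∑ k ∈ Finset.range (b.natDegree + 1),
      Polynomial.monomial (k + 1) (b.coeff k / ((k : K) + 1)), ?_⟩
  rw [map_sum]
  conv_rhs => rw [Polynomial.as_sum_range' b (b.natDegree + 1) (Nat.lt_succ_self _)]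
  refine Finset.sum_congr rfl fun k _ => ?_
  rw [Polynomial.derivative_monomial]
  simp only [Nat.add_sub_cancel, Nat.cast_add, Nat.cast_one]
  rw [div_mul_cancel₀]
  exact Nat.cast_add_one_ne_zero k

/-- The ODE `p' = κ p + b` with constant `κ` always has a polynomial solution. -/
lemma sham_exists_ode_sol [CharZero K] (κ : K) (b : Polynomial K) :
    ∃ p : Polynomial K, Polynomial.derivative p = Polynomial.C κ * p + b := by
  rcases eq_or_ne κ 0 with rfl | hκ
  · obtain ⟨p, hp⟩ := sham_exists_antideriv b
    exact ⟨p, by simp [hp]⟩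
  set g : ℕ → Polynomial K := fun k => Polynomial.C ((κ ^ k)⁻¹) * (Polynomial.derivative^[k] b)
    with hg
  set N := b.natDegree with hN
  refine ⟨-∑ k ∈ Finset.range (N + 1),
      Polynomial.C ((κ ^ (k + 1))⁻¹) * (Polynomial.derivative^[k] b), ?_⟩
  have hder : Polynomial.derivative
      (-∑ k ∈ Finset.range (N + 1),
        Polynomial.C ((κ ^ (k + 1))⁻¹) * (Polynomial.derivative^[k] b))
      = -∑ k ∈ Finset.range (N + 1), g (k + 1) := by
    rw [map_neg, map_sum]
    congr 1
    refine Finset.sum_congr rfl fun k _ => ?_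
    rw [Polynomial.derivative_C_mul, hg]
    simp [Function.iterate_succ_apply']
  rw [hder]
  have hCp : Polynomial.C κ *
      (-∑ k ∈ Finset.range (N + 1),
        Polynomial.C ((κ ^ (k + 1))⁻¹) * (Polynomial.derivative^[k] b))
      = -∑ k ∈ Finset.range (N + 1), g k := by
    rw [mul_neg, Finset.mul_sum]
    congr 1
    refine Finset.sum_congr rfl fun k _ => ?_
    have hx : κ * (κ ^ (k + 1))⁻¹ = (κ ^ k)⁻¹ := by
      rw [pow_succ, mul_inv]
      field_simp
      try ring
    rw [hg, ← mul_assoc, ← Polynomial.C_mul, hx]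
  rw [hCp]
  have e1 := Finset.sum_range_succ' g (N + 1)
  have e2 := Finset.sum_range_succ g (N + 1)
  have h2 : g (N + 1) = 0 := by
    rw [hg]
    have hz := Polynomial.iterate_derivative_eq_zero (p := b) (x := N + 1) (Nat.lt_succ_of_le hN.ge)
    simp only [hz, mul_zero]
  have h3 : g 0 = b := by simp [hg]
  have hS : ∑ k ∈ Finset.range (N + 1), g (k + 1)
      = ∑ k ∈ Finset.range (N + 1), g k + g (N + 1) - g 0 := by
    linear_combination e2 - e1
  rw [hS, h2, h3]
  try ring

/-- Degree obstruction: `q' + a q = 1` has no solution when `deg a ≥ 1`. -/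
lemma sham_no_sol (aa q : Polynomial K) (ha : 1 ≤ aa.natDegree) :
    Polynomial.derivative q + aa * q ≠ 1 := by
  intro h
  have haa : aa ≠ 0 := by
    intro h0
    rw [h0] at ha
    simp at ha
  rcases eq_or_ne q 0 with rfl | hq
  · rw [map_zero, mul_zero, add_zero] at h
    exact one_ne_zero h.symm
  have hN : (1 : Polynomial K).coeff (aa.natDegree + q.natDegree) = 0 := by
    rw [Polynomial.coeff_one]
    have : aa.natDegree + q.natDegree ≠ 0 := by omega
    simp [this]
    omega
  have hd : (Polynomial.derivative q).coeff (aa.natDegree + q.natDegree) = 0 := by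
    apply Polynomial.coeff_eq_zero_of_natDegree_lt
    have := Polynomial.natDegree_derivative_le q
    omega
  have hmul : (aa * q).coeff (aa.natDegree + q.natDegree)
      = aa.leadingCoeff * q.leadingCoeff := Polynomial.coeff_mul_degree_add_degree aa q
  have hco := congrArg (fun p => Polynomial.coeff p (aa.natDegree + q.natDegree)) h
  simp only [Polynomial.coeff_add, hd, hmul, hN, zero_add] at hco
  exact mul_ne_zero (Polynomial.leadingCoeff_ne_zero.2 haa)
    (Polynomial.leadingCoeff_ne_zero.2 hq) hco

/-- Units of multivariate polynomial rings over a field (`Fin n` version) are constants. -/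
lemma sham_isUnit_fin : ∀ (n : ℕ) (u : MvPolynomial (Fin n) K), IsUnit u → ∃ κ : K, u = C κ := by
  intro n
  induction n with
  | zero =>
    intro u _
    exact ⟨constantCoeff u, u.eq_C_of_isEmpty⟩
  | succ n ih =>
    intro u hu
    have h1 : IsUnit (finSuccEquiv K n u) := hu.map (finSuccEquiv K n)
    obtain ⟨w, hw, hwu⟩ := Polynomial.isUnit_iff.mp h1
    obtain ⟨κ, rfl⟩ := ih w hw
    have h2 : (finSuccEquiv K n).symm (Polynomial.C (C κ)) = C κ :=
      RingHom.congr_fun (finSuccEquiv_comp_C_eq_C n) κ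
    have h3 := congrArg (finSuccEquiv K n).symm hwu
    rw [AlgEquiv.symm_apply_apply] at h3
    exact ⟨κ, by rw [← h3, h2]⟩

/-- Units of multivariate polynomial rings over a field are constants. -/
lemma sham_isUnit_eq_C {σ : Type*} [Fintype σ] (u : MvPolynomial σ K) (hu : IsUnit u) :
    ∃ κ : K, u = C κ := by
  classical
  let e := renameEquiv K (Fintype.equivFin σ)
  obtain ⟨κ, hκ⟩ := sham_isUnit_fin (Fintype.card σ) (e u) (hu.map e)
  refine ⟨κ, e.injective ?_⟩
  rw [hκ]
  exact (rename_C _ κ).symm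

variable {ι : Type*}

/-- `pderiv` of a polynomial in `X none` with respect to the other variables vanishes. -/
lemma sham_pderiv_aeval_some (v : ι) (p : Polynomial K) :
    pderiv (some v) (Polynomial.aeval (X none : MvPolynomial (Option ι) K) p) = 0 := by
  rw [Derivation.comp_aeval_eq]
  rw [pderiv_X_of_ne (show (none : Option ι) ≠ some v by simp)]
  simp

lemma sham_aeval_X_injective :
    Function.Injective
      (fun p : Polynomial K => Polynomial.aeval (X none : MvPolynomial (Option ι) K) p) := by
  intro p q h
  have h2 := congrArg
    (MvPolynomial.aeval
      (fun w : Option ι => Option.elim w Polynomial.X fun _ => (0 : Polynomial K))) h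
  simp only at h2
  rw [← Polynomial.aeval_algHom_apply, ← Polynomial.aeval_algHom_apply] at h2
  simp only [aeval_X, Option.elim] at h2
  rwa [Polynomial.aeval_X_left_apply, Polynomial.aeval_X_left_apply] at h2

/-- Partial derivatives commute. -/
lemma sham_pderiv_comm [DecidableEq ι] (i j : Option ι) (φ : MvPolynomial (Option ι) K) :
    pderiv i (pderiv j φ) = pderiv j (pderiv i φ) := by
  classical
  rw [φ.as_sum]
  simp only [map_sum, pderiv_monomial]
  refine Finset.sum_congr rfl fun m _ => ?_
  rcases eq_or_ne i j with rfl | hij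
  · rfl
  · have h1 : (m - Finsupp.single j 1 : Option ι →₀ ℕ) i = m i := by
      rw [Finsupp.tsub_apply, Finsupp.single_apply, if_neg (Ne.symm hij), tsub_zero]
    have h2 : (m - Finsupp.single i 1 : Option ι →₀ ℕ) j = m j := by
      rw [Finsupp.tsub_apply, Finsupp.single_apply, if_neg hij, tsub_zero]
    have h3 : m - Finsupp.single j 1 - Finsupp.single i 1
        = m - Finsupp.single i 1 - Finsupp.single j 1 := by
      ext w
      simp only [Finsupp.tsub_apply, Finsupp.single_apply]
      omega
    rw [h1, h2, h3]
    ring_nf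

/-- An element all of whose `y`-partials vanish is a polynomial in `x` alone. -/
lemma sham_only_x [CharZero K] [DecidableEq ι] {h : MvPolynomial (Option ι) K}
    (hp : ∀ v : ι, pderiv (some v) h = 0) :
    ∃ q : Polynomial K, h = Polynomial.aeval (X none : MvPolynomial (Option ι) K) q := by
  have key : ∀ m ∈ h.support, ∀ v : ι, m (some v) = 0 := by
    intro m hm v
    by_contra hne
    have hcoeff : coeff (m - Finsupp.single (some v) 1) (pderiv (some v) h)
        = coeff m h * (m (some v) : K) := by
      conv_lhs => rw [h.as_sum]
      rw [map_sum, coeff_sum]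
      simp only [pderiv_monomial]
      rw [Finset.sum_eq_single m]
      · rw [coeff_monomial, if_pos rfl]
      · intro m' hm' hne'
        rw [coeff_monomial]
        rcases eq_or_ne (m' (some v)) 0 with h0 | h0
        · simp [h0]
        · rw [if_neg]
          intro habs
          apply hne'
          apply Finsupp.ext
          intro w
          have hw := Finsupp.ext_iff.mp habs w
          rw [Finsupp.tsub_apply, Finsupp.tsub_apply] at hw
          rcases eq_or_ne w (some v) with rfl | hwv
          · rw [Finsupp.single_eq_same] at hw
            omega
          · rw [Finsupp.single_eq_of_ne' (Ne.symm hwv)] at hw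
            omega
      · intro hmm
        exact absurd hm hmm
    rw [hp v] at hcoeff
    simp only [coeff_zero] at hcoeff
    exact mul_ne_zero (mem_support_iff.mp hm) (Nat.cast_ne_zero.mpr hne) hcoeff.symm
  refine ⟨∑ m ∈ h.support, Polynomial.monomial (m none) (coeff m h), ?_⟩
  rw [map_sum]
  conv_lhs => rw [h.as_sum]
  refine Finset.sum_congr rfl fun m hm => ?_
  rw [Polynomial.aeval_monomial]
  have hm' : m = Finsupp.single none (m none) := by
    ext w
    cases w with
    | none => simp
    | some v => simp [key m hm v]
  rw [X_pow_eq_monomial, ← hm']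
  rw [algebraMap_eq, C_mul_monomial, mul_one]

/-- Main abstract form of statement 14. -/
theorem sham_main [CharZero K] [Fintype ι] [DecidableEq ι] (α β : ι → Polynomial K)
    (D : Derivation K (MvPolynomial (Option ι) K) (MvPolynomial (Option ι) K))
    (hDx : D (X none) = 1)
    (hDy : ∀ v : ι, D (X (some v)) =
      Polynomial.aeval (X none) (α v) * X (some v) + Polynomial.aeval (X none) (β v))
    (hD : Derivation.IsSimple D) (v0 : ι) :
    ¬ ∃ f : MvPolynomial (Option ι) K, D f = X (some v0) := by
  rintro ⟨f, hf⟩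
  -- consequence of simplicity: eigen-elements are constants
  have eigen : ∀ u c : MvPolynomial (Option ι) K, D u = c * u → u = 0 ∨ ∃ κ : K, u = C κ := by
    intro u c hu
    have hinv : ∀ z ∈ Ideal.span {u}, D z ∈ Ideal.span {u} := by
      intro z hz
      rw [Ideal.mem_span_singleton] at hz ⊢
      obtain ⟨t, rfl⟩ := hz
      have hz2 : D (u * t) = u * (c * t + D t) := by
        rw [Derivation.leibniz]
        simp only [smul_eq_mul, hu]
        ring
      rw [hz2]
      exact Dvd.intro _ rfl
    rcases hD _ hinv with hbot | htop
    · exact Or.inl (Ideal.span_singleton_eq_bot.mp hbot)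
    · exact Or.inr (sham_isUnit_eq_C u (Ideal.span_singleton_eq_top.mp htop))
  -- consequence of simplicity: every α v is nonconstant
  have hnc : ∀ (v : ι) (κ : K), α v ≠ Polynomial.C κ := by
    intro v κ hC
    obtain ⟨p, hp⟩ := sham_exists_ode_sol κ (β v)
    set u : MvPolynomial (Option ι) K := X (some v) - Polynomial.aeval (X none) p with hu
    have hDu : D u = C κ * u := by
      rw [hu, map_sub, hDy v, Derivation.comp_aeval_eq, hDx, smul_eq_mul, mul_one, hp, hC]
      simp only [map_add, map_mul, Polynomial.aeval_C, algebraMap_eq]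
      ring
    have hpd : pderiv (some v) u = 1 := by
      rw [hu, map_sub, pderiv_X_self, sham_pderiv_aeval_some, sub_zero]
    rcases eigen u (C κ) hDu with h0 | ⟨κ', hκ'⟩
    · rw [h0, map_zero] at hpd
      exact one_ne_zero hpd.symm
    · rw [hκ', ← algebraMap_eq] at hpd
      rw [Derivation.map_algebraMap] at hpd
      exact one_ne_zero hpd.symm
  have hane : ∀ v : ι, Polynomial.aeval (X none : MvPolynomial (Option ι) K) (α v) ≠ 0 := by
    intro v h0
    apply hnc v 0
    rw [map_zero]
    apply sham_aeval_X_injective (K := K) (ι := ι)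
    simpa using h0
  -- the commutator identity
  have hcomm : ∀ (v : ι) (φ : MvPolynomial (Option ι) K), pderiv (some v) (D φ)
      = D (pderiv (some v) φ)
        + Polynomial.aeval (X none : MvPolynomial (Option ι) K) (α v) * pderiv (some v) φ := by
    intro v
    have key : ⁅(pderiv (some v) : Derivation K (MvPolynomial (Option ι) K)
          (MvPolynomial (Option ι) K)), D⁆
        = (Polynomial.aeval (X none : MvPolynomial (Option ι) K) (α v))
            • (pderiv (some v) : Derivation K (MvPolynomial (Option ι) K)
              (MvPolynomial (Option ι) K)) := by
      apply MvPolynomial.derivation_ext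
      intro w
      rw [Derivation.commutator_apply, Derivation.smul_apply]
      cases w with
      | none =>
        rw [hDx, pderiv_X_of_ne (show (none : Option ι) ≠ some v by simp)]
        simp
      | some u =>
        rw [hDy u]
        rcases eq_or_ne u v with rfl | huv
        · rw [pderiv_X_self, map_add, pderiv_mul, pderiv_X_self,
            sham_pderiv_aeval_some, sham_pderiv_aeval_some]
          have h1 : D (1 : MvPolynomial (Option ι) K) = 0 := by simp
          rw [h1]
          simp [smul_eq_mul]
        · rw [pderiv_X_of_ne (show some u ≠ some v by simpa using huv), map_add, pderiv_mul,
            pderiv_X_of_ne (show some u ≠ some v by simpa using huv),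
            sham_pderiv_aeval_some, sham_pderiv_aeval_some]
          simp
    intro φ
    have h2 := DFunLike.congr_fun key φ
    rw [Derivation.commutator_apply, Derivation.smul_apply, smul_eq_mul] at h2
    linear_combination h2
  -- all partials in directions other than v0 vanish
  have hzero : ∀ v : ι, v ≠ v0 → pderiv (some v) f = 0 := by
    intro v hv
    have h1 : D (pderiv (some v) f)
        = (-(Polynomial.aeval (X none : MvPolynomial (Option ι) K) (α v)))
            * pderiv (some v) f := by
      have h2 := hcomm v f
      rw [hf, pderiv_X_of_ne (show some v0 ≠ some v by simpa using (Ne.symm hv))] at h2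
      linear_combination -h2
    rcases eigen _ _ h1 with h0 | ⟨κ, hκ⟩
    · exact h0
    · rw [hκ] at h1 ⊢
      rw [← algebraMap_eq, Derivation.map_algebraMap, algebraMap_eq] at h1
      rcases mul_eq_zero.mp h1.symm with hl | hr'
      · exact absurd (neg_eq_zero.mp hl) (hane v)
      · exact hr'
  -- second derivative in direction v0 vanishes
  have hDg : D (pderiv (some v0) f)
      = 1 - Polynomial.aeval (X none : MvPolynomial (Option ι) K) (α v0)
          * pderiv (some v0) f := by
    have h2 := hcomm v0 f
    rw [hf, pderiv_X_self] at h2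
    linear_combination -h2
  have hzero2 : pderiv (some v0) (pderiv (some v0) f) = 0 := by
    have h1 : D (pderiv (some v0) (pderiv (some v0) f))
        = (-(Polynomial.aeval (X none : MvPolynomial (Option ι) K) (α v0)
              + Polynomial.aeval (X none : MvPolynomial (Option ι) K) (α v0)))
            * pderiv (some v0) (pderiv (some v0) f) := by
      have h2 := hcomm v0 (pderiv (some v0) f)
      rw [hDg, map_sub, pderiv_mul, sham_pderiv_aeval_some, pderiv_one] at h2
      linear_combination -h2
    rcases eigen _ _ h1 with h0 | ⟨κ, hκ⟩
    · exact h0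
    · rw [hκ] at h1 ⊢
      rw [← algebraMap_eq, Derivation.map_algebraMap, algebraMap_eq] at h1
      rcases mul_eq_zero.mp h1.symm with hl | hr'
      · exfalso
        have hl2 : Polynomial.aeval (X none : MvPolynomial (Option ι) K) (α v0)
            + Polynomial.aeval (X none : MvPolynomial (Option ι) K) (α v0) = 0 :=
          neg_eq_zero.mp hl
        have h2a : α v0 + α v0 = 0 := by
          apply sham_aeval_X_injective (K := K) (ι := ι)
          simp only [map_add, map_zero]
          exact hl2
        have h2b : (2 : Polynomial K) * α v0 = 0 := by linear_combination h2a
        rcases mul_eq_zero.mp h2b with h | h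
        · exact two_ne_zero h
        · exact hnc v0 0 (by rw [h, map_zero])
      · exact hr'
  -- pderiv v0 f is a polynomial in x alone
  have hallzero : ∀ v : ι, pderiv (some v) (pderiv (some v0) f) = 0 := by
    intro v
    rcases eq_or_ne v v0 with rfl | hv
    · exact hzero2
    · rw [sham_pderiv_comm, hzero v hv, map_zero]
  obtain ⟨q, hq⟩ := sham_only_x hallzero
  rw [hq, Derivation.comp_aeval_eq, hDx, smul_eq_mul, mul_one] at hDg
  have hfinal : Polynomial.derivative q + α v0 * q = 1 := by
    apply sham_aeval_X_injective (K := K) (ι := ι)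
    simp only [map_add, map_mul, map_one]
    linear_combination hDg
  have hdeg : 1 ≤ (α v0).natDegree := by
    by_contra hlt
    push_neg at hlt
    have h0 : (α v0).natDegree = 0 := by omega
    exact hnc v0 ((α v0).coeff 0) (Polynomial.eq_C_of_natDegree_eq_zero h0)
  exact sham_no_sol (α v0) q hdeg hfinal

end ShamAux

/-- If the Shamsuddin derivation `D = ∂ₓ + Σᵢⱼ (aᵢ(x) yᵢⱼ + bᵢⱼ(x)) ∂ᵢⱼ`
(with `aᵢ ≠ aₗ` for `i ≠ l`) is simple, then `y₁,₁ ∉ Im D`. -/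
theorem statement14 (K : Type*) [Field K] [CharZero K]
    (s : ℕ) (hs : 1 ≤ s) (r : Fin s → ℕ) (hr : ∀ i, 1 ≤ r i)
    (a : Fin s → Polynomial K) (b : (i : Fin s) → Fin (r i) → Polynomial K)
    (ha : ∀ i l : Fin s, i ≠ l → a i ≠ a l)
    (D : Derivation K (MvPolynomial (Option (Σ i : Fin s, Fin (r i))) K)
      (MvPolynomial (Option (Σ i : Fin s, Fin (r i))) K))
    (hDx : D (X none) = 1)
    (hDy : ∀ (i : Fin s) (j : Fin (r i)),
      D (X (some ⟨i, j⟩)) =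
        Polynomial.aeval (X none) (a i) * X (some ⟨i, j⟩)
          + Polynomial.aeval (X none) (b i j))
    (hD : Derivation.IsSimple D) :
    ¬ ∃ f : MvPolynomial (Option (Σ i : Fin s, Fin (r i))) K,
        D f = X (some ⟨⟨0, hs⟩, ⟨0, hr ⟨0, hs⟩⟩⟩) := by
  classical
  exact sham_main (fun v : Σ i : Fin s, Fin (r i) => a v.1)
    (fun v : Σ i : Fin s, Fin (r i) => b v.1 v.2) D hDx
    (by rintro ⟨i, j⟩; exact hDy i j) hD ⟨⟨0, hs⟩, ⟨0, hr ⟨0, hs⟩⟩⟩
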